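/- Let u(X,Y) = exp(β₁ᵀX + β₀) · f(Y | aᵀX + b, σ) where f(y|μ,σ) is the Gaussian density with mean μ and variance σ > 0. Then the partial differential equation ∂u/∂β₁ · ∂u/∂b = ∂u/∂β₀ · ∂u/∂a holds for all (X,Y) ∈ ℝ^d × ℝ, where ∂u/∂β₁ and ∂u/∂a are gradients in ℝ^d and the equality is between vectors in ℝ^d. -/

import Mathlib

open Real Finset

/-- The univariate Gaussian density with mean `μ` and variance `σ`. -/
noncomputable def gaussPDF (μ σ y : ℝ) : ℝ :=
  (Real.sqrt (2 * Real.pi * σ))⁻¹ * Real.exp (-(y - μ) ^ 2 / (2 * σ))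

/-- The expert function `u(X,Y) = exp(β₁ᵀX + β₀) f(Y | aᵀX + b, σ)` as a function
of the parameters `(β₁, β₀, a, b)` for fixed data `(X, Y)` and variance `σ`. -/
noncomputable def expertFn (d : ℕ) (X : Fin d → ℝ) (Y σ : ℝ)
    (β₁ : Fin d → ℝ) (β₀ : ℝ) (a : Fin d → ℝ) (b : ℝ) : ℝ :=
  Real.exp ((∑ j, β₁ j * X j) + β₀) * gaussPDF ((∑ j, a j * X j) + b) σ Y

lemma sum_update_mul {d : ℕ} (X v : Fin d → ℝ) (l : Fin d) (s : ℝ) :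
    ∑ j, Function.update v l s j * X j
      = s * X l + ((∑ j, v j * X j) - v l * X l) := by
  have h : (fun j => Function.update v l s j * X j)
      = Function.update (fun j => v j * X j) l (s * X l) := by
    funext j
    by_cases hj : j = l <;> simp [Function.update, hj]
  rw [h, Finset.sum_update_of_mem (Finset.mem_univ l),
    Finset.sum_sdiff_eq_sub (Finset.subset_univ _), Finset.sum_singleton]

/-- The PDE `∂u/∂β₁ ⬝ ∂u/∂b = ∂u/∂β₀ ⬝ ∂u/∂a` holds componentwise, where the
gradients in `β₁` and `a` are taken coordinate by coordinate. -/
theorem expert_gating_pde (d : ℕ) (X : Fin d → ℝ) (Y σ : ℝ) (hσ : 0 < σ)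
    (β₁ : Fin d → ℝ) (β₀ : ℝ) (a : Fin d → ℝ) (b : ℝ) (l : Fin d) :
    deriv (fun s => expertFn d X Y σ (Function.update β₁ l s) β₀ a b) (β₁ l) *
      deriv (fun s => expertFn d X Y σ β₁ β₀ a s) b =
    deriv (fun s => expertFn d X Y σ β₁ s a b) β₀ *
      deriv (fun s => expertFn d X Y σ β₁ β₀ (Function.update a l s) b) (a l) := by
  set S : ℝ := ∑ j, β₁ j * X j with hS
  set M : ℝ := ∑ j, a j * X j with hM
  set C : ℝ := gaussPDF (M + b) σ Y with hC
  set D : ℝ := deriv (fun m => gaussPDF m σ Y) (M + b) with hD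
  have hdiff : DifferentiableAt ℝ (fun m => gaussPDF m σ Y) (M + b) := by
    simp only [gaussPDF]
    fun_prop
  have hg : HasDerivAt (fun m => gaussPDF m σ Y) D (M + b) := hdiff.hasDerivAt
  -- derivative in β₁ l
  have h1 : HasDerivAt (fun s => expertFn d X Y σ (Function.update β₁ l s) β₀ a b)
      (Real.exp (β₁ l * X l + ((S - β₁ l * X l) + β₀)) * (1 * X l) * C) (β₁ l) := by
    have hfun : (fun s => expertFn d X Y σ (Function.update β₁ l s) β₀ a b)
        = fun s => Real.exp (s * X l + ((S - β₁ l * X l) + β₀)) * C := by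
      funext s
      simp only [expertFn, sum_update_mul, ← hS, ← hM, ← hC]
      ring_nf
    rw [hfun]
    exact (((hasDerivAt_id (β₁ l)).mul_const (X l)).add_const _).exp.mul_const C
  -- derivative in b
  have h2 : HasDerivAt (fun s => expertFn d X Y σ β₁ β₀ a s)
      (Real.exp (S + β₀) * (D * 1)) b := by
    have hinner : HasDerivAt (fun s : ℝ => M + s) 1 b := (hasDerivAt_id b).const_add M
    exact (hg.comp b hinner).const_mul _
  -- derivative in β₀
  have h3 : HasDerivAt (fun s => expertFn d X Y σ β₁ s a b)
      (Real.exp (S + β₀) * C) (β₀) := by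
    have := (((hasDerivAt_id β₀).const_add S).exp).mul_const C
    simpa [expertFn, ← hS, ← hM, ← hC] using this
  -- derivative in a l
  have h4 : HasDerivAt (fun s => expertFn d X Y σ β₁ β₀ (Function.update a l s) b)
      (Real.exp (S + β₀) * (D * (1 * X l))) (a l) := by
    have hfun : (fun s => expertFn d X Y σ β₁ β₀ (Function.update a l s) b)
        = fun s => Real.exp (S + β₀) * gaussPDF (s * X l + ((M - a l * X l) + b)) σ Y := by
      funext s
      simp only [expertFn, sum_update_mul, ← hS, ← hM]
      ring_nf
    rw [hfun]
    have hinner : HasDerivAt (fun s : ℝ => s * X l + ((M - a l * X l) + b)) (1 * X l) (a l) :=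
      ((hasDerivAt_id (a l)).mul_const (X l)).add_const _
    have hpt : a l * X l + ((M - a l * X l) + b) = M + b := by ring
    have hg2 : HasDerivAt (fun m => gaussPDF m σ Y) D (a l * X l + ((M - a l * X l) + b)) := by
      rw [hpt]; exact hg
    exact (hg2.comp (a l) hinner).const_mul _
  rw [h1.deriv, h2.deriv, h3.deriv, h4.deriv]
  have hexp : Real.exp (β₁ l * X l + ((S - β₁ l * X l) + β₀)) = Real.exp (S + β₀) := by
    ring_nf
  rw [hexp]
  ring
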